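/- Let H₁, H₂ be spatial hybrid numbers with g(H₁,H₁) = δ₁, g(H₂,H₂) = δ₂ where δ₁, δ₂ ∈ {1,-1}, and g(H₁,H₂) = 0. Then the hybridian product μ = H₁H₂ is a spatial hybrid number satisfying g(μ,μ) = δ₁δ₂, g(H₁,μ) = 0, and g(H₂,μ) = 0. -/

import Mathlib

open Real Matrix

noncomputable section

/-- Scalar product on the spatial hybrid number space, coordinates (b,c,d). -/
def g (x y : Fin 3 → ℝ) : ℝ := x 0 * y 0 - x 0 * y 1 - y 0 * x 1 - x 2 * y 2

/-- Hybridian product of g-orthogonal spatial hybrid numbers. -/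
def hprod (x y : Fin 3 → ℝ) : Fin 3 → ℝ :=
  ![x 0 * y 2 - y 0 * x 2, x 0 * y 2 - y 0 * x 2 - x 1 * y 2 + y 1 * x 2,
    y 0 * x 1 - x 0 * y 1]

/-- Gram matrix of g. -/
def Gmat : Matrix (Fin 3) (Fin 3) ℝ := !![1, -1, 0; -1, 0, 0; 0, 0, -1]

/-- For g-orthogonal unit spatial hybrid numbers of signs δ₁, δ₂, the
hybridian product μ = H₁H₂ satisfies g(μ,μ) = δ₁δ₂ and is g-orthogonal to
H₁ and H₂. -/
theorem stmt5 (H₁ H₂ : Fin 3 → ℝ) (δ₁ δ₂ : ℝ)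
    (hδ₁ : δ₁ = 1 ∨ δ₁ = -1) (hδ₂ : δ₂ = 1 ∨ δ₂ = -1)
    (h₁ : g H₁ H₁ = δ₁) (h₂ : g H₂ H₂ = δ₂) (h₁₂ : g H₁ H₂ = 0) :
    g (hprod H₁ H₂) (hprod H₁ H₂) = δ₁ * δ₂ ∧
    g H₁ (hprod H₁ H₂) = 0 ∧ g H₂ (hprod H₁ H₂) = 0 := by
  simp only [g, hprod] at *
  norm_num at *
  simp only [Matrix.cons_val_two, Matrix.tail_cons, Matrix.head_cons] at ⊢
  refine ⟨?_, by ring, by ring⟩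
  linear_combination (H₂ 0 * H₂ 0 - 2 * H₂ 0 * H₂ 1 - H₂ 2 * H₂ 2) * h₁ + δ₁ * h₂
    - (H₁ 0 * H₂ 0 - H₁ 0 * H₂ 1 - H₂ 0 * H₁ 1 - H₁ 2 * H₂ 2) * h₁₂
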